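/- The category FPCM of trace monoids and basic homomorphisms has all (small) products. In particular, the product of a family {M(Eⱼ, Iⱼ)}_{j∈J} is the trace monoid M(E, I) where E = (∏ⱼ Eⱼ₊) \ {(*)} (the Cartesian product of pointed sets Eⱼ₊ = Eⱼ ⊔ {*} minus the all-* family) and I is obtained from the product of the commutativity relations Tⱼ = Iⱼ ∪ Δ_{Eⱼ₊} ∪ (Eⱼ × {*}) ∪ ({*} × Eⱼ) by removing the diagonal and all pairs involving (*). -/

import Mathlib

open CategoryTheory

/-- The elementary commutation relation on words generated by an independence relation. -/
def traceRel (E : Type) (I : Set (E × E)) : FreeMonoid E → FreeMonoid E → Prop :=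
  fun x y => ∃ a b : E, (a, b) ∈ I ∧ x = FreeMonoid.of a * FreeMonoid.of b ∧
    y = FreeMonoid.of b * FreeMonoid.of a

/-- The congruence on the free monoid generated by commutation of independent pairs. -/
def traceCon (E : Type) (I : Set (E × E)) : Con (FreeMonoid E) := conGen (traceRel E I)

/-- The trace monoid `M(E,I)`. -/
abbrev TraceMonoid (E : Type) (I : Set (E × E)) : Type := (traceCon E I).Quotient

/-- The canonical projection from words to traces. -/
def trcMk {E : Type} {I : Set (E × E)} : FreeMonoid E →* TraceMonoid E I :=
  (traceCon E I).mk'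

/-- The generator of the trace monoid corresponding to an event `e`. -/
def trc {E : Type} {I : Set (E × E)} (e : E) : TraceMonoid E I :=
  trcMk (FreeMonoid.of e)

/-- `I` is an independence relation: irreflexive and symmetric. -/
structure IsIndep {E : Type} (I : Set (E × E)) : Prop where
  irrefl : ∀ a : E, (a, a) ∉ I
  symm : ∀ a b : E, (a, b) ∈ I → (b, a) ∈ I

/-- A homomorphism of trace monoids is basic if it sends generators to generators or to `1`. -/
def IsBasic {E E' : Type} {I : Set (E × E)} {I' : Set (E' × E')}
    (f : TraceMonoid E I →* TraceMonoid E' I') : Prop :=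
  ∀ e : E, (∃ e' : E', f (trc e) = trc e') ∨ f (trc e) = 1

/-- A basic homomorphism preserves independence. -/
def IsIndepPres {E E' : Type} {I : Set (E × E)} {I' : Set (E' × E')}
    (f : TraceMonoid E I →* TraceMonoid E' I') : Prop :=
  ∀ a b : E, (a, b) ∈ I → f (trc a) ≠ f (trc b) ∨ (f (trc a) = 1 ∧ f (trc b) = 1)

/-- The monoid homomorphism out of a trace monoid induced by a map on generators whose
images commute at independent pairs. -/
def liftHom {E : Type} {I : Set (E × E)} {N : Type*} [Monoid N] (φ : E → N)
    (hφ : ∀ a b : E, (a, b) ∈ I → φ a * φ b = φ b * φ a) : TraceMonoid E I →* N :=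
  (traceCon E I).lift (FreeMonoid.lift φ) (by
    apply Con.conGen_le.2
    rintro x y ⟨a, b, hab, rfl, rfl⟩
    rw [Con.ker_rel]
    simp only [map_mul, FreeMonoid.lift_eval_of]
    exact hφ a b hab)

@[simp] theorem liftHom_trc {E : Type} {I : Set (E × E)} {N : Type*} [Monoid N] (φ : E → N)
    (hφ : ∀ a b : E, (a, b) ∈ I → φ a * φ b = φ b * φ a) (e : E) :
    liftHom φ hφ (trc (I := I) e) = φ e := by
  show (traceCon E I).lift _ _ ((traceCon E I).mk' (FreeMonoid.of e)) = φ e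
  exact FreeMonoid.lift_eval_of ..

theorem trc_comm {E : Type} {I : Set (E × E)} {a b : E} (h : (a, b) ∈ I) :
    (trc a : TraceMonoid E I) * trc b = trc b * trc a := by
  show trcMk (FreeMonoid.of a) * trcMk (FreeMonoid.of b) =
    trcMk (FreeMonoid.of b) * trcMk (FreeMonoid.of a)
  rw [← map_mul, ← map_mul]
  exact (Con.eq _).2 (ConGen.Rel.of _ _ ⟨a, b, h, rfl, rfl⟩)

theorem isBasic_id {E : Type} {I : Set (E × E)} :
    IsBasic (MonoidHom.id (TraceMonoid E I)) := fun e => Or.inl ⟨e, rfl⟩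

theorem isBasic_comp {E₁ E₂ E₃ : Type} {I₁ : Set (E₁ × E₁)} {I₂ : Set (E₂ × E₂)}
    {I₃ : Set (E₃ × E₃)} {f : TraceMonoid E₁ I₁ →* TraceMonoid E₂ I₂}
    {g : TraceMonoid E₂ I₂ →* TraceMonoid E₃ I₃} (hf : IsBasic f) (hg : IsBasic g) :
    IsBasic (g.comp f) := by
  intro e
  rcases hf e with ⟨e', he⟩ | he
  · rcases hg e' with ⟨e'', he''⟩ | he''
    · exact Or.inl ⟨e'', by simp [MonoidHom.comp_apply, he, he'']⟩
    · exact Or.inr (by simp [MonoidHom.comp_apply, he, he''])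
  · exact Or.inr (by simp [MonoidHom.comp_apply, he])
/-- An object of the category `FPCM`: a set of events with an independence relation. -/
structure FPCMObj where
  E : Type
  I : Set (E × E)
  indep : IsIndep I

/-- The category `FPCM` of trace monoids and basic homomorphisms. -/
instance : Category FPCMObj where
  Hom X Y := {f : TraceMonoid X.E X.I →* TraceMonoid Y.E Y.I // IsBasic f}
  id _ := ⟨MonoidHom.id _, isBasic_id⟩
  comp f g := ⟨g.1.comp f.1, isBasic_comp f.2 g.2⟩
  id_comp _ := Subtype.ext (MonoidHom.comp_id _)
  comp_id _ := Subtype.ext (MonoidHom.id_comp _)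
  assoc _ _ _ := Subtype.ext rfl

/-- An object of the category `ComRel`: a pointed set `E ⊔ {*}` (modelled as `Option E` with
point `none`) together with a reflexive symmetric commutativity relation containing all
pairs with the point. -/
structure ComRelObj where
  E : Type
  T : Set (Option E × Option E)
  refl : ∀ a : Option E, (a, a) ∈ T
  symm : ∀ a b : Option E, (a, b) ∈ T → (b, a) ∈ T
  star_left : ∀ a : Option E, ((none : Option E), a) ∈ T
  star_right : ∀ a : Option E, (a, (none : Option E)) ∈ T

/-- The category `ComRel` of pointed sets with commutativity relations and pointed
relation-preserving maps. -/
instance : Category ComRelObj where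
  Hom X Y := {φ : Option X.E → Option Y.E //
    φ none = none ∧ ∀ a b : Option X.E, (a, b) ∈ X.T → (φ a, φ b) ∈ Y.T}
  id _ := ⟨id, rfl, fun _ _ h => h⟩
  comp f g := ⟨g.1 ∘ f.1, by simp [f.2.1, g.2.1], fun a b h => g.2.2 _ _ (f.2.2 _ _ h)⟩
  id_comp _ := Subtype.ext rfl
  comp_id _ := Subtype.ext rfl
  assoc _ _ _ := Subtype.ext rfl

/-- The commutativity relation `T = I ∪ (E × {*}) ∪ ({*} × E) ∪ Δ` associated to an
independence relation `I`. -/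
def comRelOf (X : FPCMObj) : ComRelObj where
  E := X.E
  T := {p | p.1 = p.2 ∨ p.1 = none ∨ p.2 = none ∨
        ∃ a b : X.E, (a, b) ∈ X.I ∧ p = (some a, some b)}
  refl _ := Or.inl rfl
  symm a b h := by
    rcases h with h | h | h | ⟨x, y, hxy, h⟩
    · exact Or.inl h.symm
    · exact Or.inr (Or.inr (Or.inl h))
    · exact Or.inr (Or.inl h)
    · refine Or.inr (Or.inr (Or.inr ⟨y, x, X.indep.symm _ _ hxy, ?_⟩))
      obtain ⟨h1, h2⟩ := Prod.mk.injEq .. ▸ h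
      simp_all
  star_left _ := Or.inr (Or.inl rfl)
  star_right _ := Or.inr (Or.inr (Or.inl rfl))

open CategoryTheory.Limits

/-- The explicit product of a family of trace monoids in `FPCM`: the generators are the
families in `∏ⱼ (Eⱼ ⊔ {*})` other than the all-`*` family, and the independence relation is
obtained from the product of the commutativity relations by removing the diagonal. -/
def prodFPCMObj (J : Type) (d : J → FPCMObj) : FPCMObj where
  E := {x : ∀ j : J, Option (d j).E // x ≠ fun _ => none}
  I := {p | p.1 ≠ p.2 ∧ ∀ j : J, (p.1.val j, p.2.val j) ∈ (comRelOf (d j)).T}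
  indep :=
    { irrefl := fun a h => h.1 rfl
      symm := fun a b h => ⟨fun e => h.1 e.symm, fun j => (comRelOf (d j)).symm _ _ (h.2 j)⟩ }

/-! ### Auxiliary lemmas about trace monoids -/

/-- The letter-counting invariant of a trace. -/
def letterCount {E : Type} {I : Set (E × E)} :
    TraceMonoid E I →* Multiplicative (Multiset E) :=
  liftHom (fun e => Multiplicative.ofAdd {e}) (fun _ _ _ => mul_comm _ _)

theorem trc_injective {E : Type} {I : Set (E × E)} {a b : E}
    (h : (trc a : TraceMonoid E I) = trc b) : a = b := by
  have h2 := congrArg (letterCount (I := I)) h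
  simp only [letterCount, liftHom_trc] at h2
  simpa using h2

theorem trc_ne_one {E : Type} {I : Set (E × E)} (a : E) :
    (trc a : TraceMonoid E I) ≠ 1 := by
  intro h
  have h2 := congrArg (letterCount (I := I)) h
  simp only [letterCount, liftHom_trc, map_one] at h2
  have : ({a} : Multiset E) = 0 := by simpa using h2
  simp at this

theorem traceHom_ext {E : Type} {I : Set (E × E)} {N : Type*} [Monoid N]
    {f g : TraceMonoid E I →* N} (h : ∀ e : E, f (trc e) = g (trc e)) : f = g := by
  have key : f.comp trcMk = g.comp trcMk := FreeMonoid.hom_eq fun a => h a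
  refine MonoidHom.ext fun x => ?_
  obtain ⟨w, rfl⟩ := Con.mk'_surjective x
  exact DFunLike.congr_fun key w

/-- If two generators commute in the trace monoid, they are equal or independent. -/
theorem trc_comm_cases {E : Type} {I : Set (E × E)}
    (hsym : ∀ a b : E, (a, b) ∈ I → (b, a) ∈ I) {a b : E}
    (h : (trc a : TraceMonoid E I) * trc b = trc b * trc a) :
    a = b ∨ (a, b) ∈ I := by
  by_contra hc
  push_neg at hc
  obtain ⟨hne, hni⟩ := hc
  classical
  set φ : E → FreeMonoid E := fun e =>
    if e = a then FreeMonoid.of a else if e = b then FreeMonoid.of b else 1 with hφdef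
  have hφ : ∀ x y : E, (x, y) ∈ I → φ x * φ y = φ y * φ x := by
    intro x y hxy
    by_cases hxa : x = a
    · by_cases hyb : y = b
      · exact absurd (hxa ▸ hyb ▸ hxy) hni
      · by_cases hya : y = a
        · subst hxa hya; rfl
        · simp [φ, hxa, hya, hyb]
    · by_cases hxb : x = b
      · by_cases hya : y = a
        · exact absurd (hsym _ _ (hxb ▸ hya ▸ hxy)) hni
        · by_cases hyb : y = b
          · subst hxb hyb; rfl
          · simp [φ, hxa, hxb, hya, hyb]
      · simp [φ, hxa, hxb]
  have h2 := congrArg (liftHom φ hφ) h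
  simp only [map_mul, liftHom_trc] at h2
  have ha : φ a = FreeMonoid.of a := by simp [φ]
  have hb : φ b = FreeMonoid.of b := by simp [φ, Ne.symm hne]
  rw [ha, hb] at h2
  have h3 := congrArg FreeMonoid.toList h2
  simp at h3
  exact hne h3.1

/-! ### The product fan -/

/-- The `j`-th projection out of the product trace monoid. -/
def prodProj (J : Type) (d : J → FPCMObj) (j : J) :
    TraceMonoid (prodFPCMObj J d).E (prodFPCMObj J d).I →*
      TraceMonoid (d j).E (d j).I :=
  liftHom (fun x => (x.val j).elim 1 trc) (by
    rintro x y ⟨-, hT⟩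
    beta_reduce
    have hj := hT j
    simp only [comRelOf, Set.mem_setOf_eq] at hj
    change x.val j = y.val j ∨ x.val j = none ∨ y.val j = none ∨
      ∃ a b, (a, b) ∈ (d j).I ∧ (x.val j, y.val j) = (some a, some b) at hj
    rcases hj with heq | hx | hy | ⟨a, b, hab, hp⟩
    · rw [heq]
    · rw [hx]; simp
    · rw [hy]; simp
    · simp only [Prod.mk.injEq] at hp
      rw [hp.1, hp.2]
      exact trc_comm hab)

theorem prodProj_basic (J : Type) (d : J → FPCMObj) (j : J) :
    IsBasic (prodProj J d j) := by
  intro e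
  cases hx : e.val j with
  | none =>
    right
    simp [prodProj, liftHom_trc, hx]
  | some e' =>
    left
    exact ⟨e', by simp [prodProj, liftHom_trc, hx]⟩

open CategoryTheory.Limits in
/-- The product fan in `FPCM`. -/
def prodFan (J : Type) (d : J → FPCMObj) : Fan d :=
  Fan.mk (prodFPCMObj J d) (fun j => ⟨prodProj J d j, prodProj_basic J d j⟩)

open CategoryTheory.Limits

variable {J : Type} {d : J → FPCMObj}

open scoped Classical

/-- Given a cone `s` over the family, the image in `Option (E j)` of a generator of `s.pt`. -/
noncomputable def coneMapAux (s : Fan d) (e : s.pt.E) (j : J) : Option (d j).E :=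
  if h : ∃ e', (s.proj j).1 (trc e) = trc e' then some h.choose else none

theorem coneMapAux_some {s : Fan d} {e : s.pt.E} {j : J} {e' : (d j).E}
    (h : coneMapAux s e j = some e') : (s.proj j).1 (trc e) = trc e' := by
  unfold coneMapAux at h
  split_ifs at h with h1
  · obtain rfl : h1.choose = e' := by injection h
    exact h1.choose_spec

theorem coneMapAux_none {s : Fan d} {e : s.pt.E} {j : J}
    (h : coneMapAux s e j = none) : (s.proj j).1 (trc e) = 1 := by
  unfold coneMapAux at h
  split_ifs at h with h1
  rcases (s.proj j).2 e with ⟨e', he⟩ | he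
  · exact absurd ⟨e', he⟩ h1
  · exact he

theorem coneMapAux_eq_some {s : Fan d} {e : s.pt.E} {j : J} {e' : (d j).E}
    (h : (s.proj j).1 (trc e) = trc e') : coneMapAux s e j = some e' := by
  have hex : ∃ e'', (s.proj j).1 (trc e) = trc e'' := ⟨e', h⟩
  rw [coneMapAux, dif_pos hex]
  exact congrArg some (trc_injective (hex.choose_spec.symm.trans h))

theorem coneMapAux_eq_none {s : Fan d} {e : s.pt.E} {j : J}
    (h : (s.proj j).1 (trc e) = 1) : coneMapAux s e j = none := by
  rw [coneMapAux, dif_neg]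
  rintro ⟨e', he⟩
  exact trc_ne_one e' (he.symm.trans h)

/-- The image of a generator of the cone point in the product trace monoid. -/
noncomputable def coneGen (s : Fan d) (e : s.pt.E) :
    TraceMonoid (prodFPCMObj J d).E (prodFPCMObj J d).I :=
  if h : coneMapAux s e ≠ fun _ => none then trc ⟨coneMapAux s e, h⟩ else 1

theorem coneGen_comm (s : Fan d) :
    ∀ a b : s.pt.E, (a, b) ∈ s.pt.I → coneGen s a * coneGen s b = coneGen s b * coneGen s a := by
  intro a b hab
  unfold coneGen
  split_ifs with h1 h2 h2
  · by_cases heq : coneMapAux s a = coneMapAux s b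
    · have : (⟨coneMapAux s a, h1⟩ : (prodFPCMObj J d).E) = ⟨coneMapAux s b, h2⟩ :=
        Subtype.ext heq
      rw [this]
    · apply trc_comm
      refine ⟨fun hx => heq (congrArg Subtype.val hx), fun j => ?_⟩
      show _ ∈ (comRelOf (d j)).T
      simp only [comRelOf, Set.mem_setOf_eq]
      cases hA : coneMapAux s a j with
      | none => exact Or.inr (Or.inl rfl)
      | some a' =>
        cases hB : coneMapAux s b j with
        | none => exact Or.inr (Or.inr (Or.inl rfl))
        | some b' =>
          have hfa := coneMapAux_some hA
          have hfb := coneMapAux_some hB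
          have hcomm : (trc a' : TraceMonoid (d j).E (d j).I) * trc b' = trc b' * trc a' := by
            have h3 := congrArg (s.proj j).1 (trc_comm hab)
            simpa [map_mul, hfa, hfb] using h3
          rcases trc_comm_cases (d j).indep.symm hcomm with h | h
          · exact Or.inl (by rw [h])
          · exact Or.inr (Or.inr (Or.inr ⟨a', b', h, rfl⟩))
  · rw [mul_one, one_mul]
  · rw [mul_one, one_mul]
  · rfl

/-- The induced map from the cone point to the product trace monoid. -/
noncomputable def coneLiftHom (s : Fan d) :
    TraceMonoid s.pt.E s.pt.I →*
      TraceMonoid (prodFPCMObj J d).E (prodFPCMObj J d).I :=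
  liftHom (coneGen s) (coneGen_comm s)

theorem coneLiftHom_basic (s : Fan d) : IsBasic (coneLiftHom s) := by
  intro e
  simp only [coneLiftHom, liftHom_trc, coneGen]
  split_ifs with h
  · exact Or.inl ⟨_, rfl⟩
  · exact Or.inr rfl

theorem coneLiftHom_fac (s : Fan d) (j : J) (e : s.pt.E) :
    prodProj J d j (coneLiftHom s (trc e)) = (s.proj j).1 (trc e) := by
  rw [coneLiftHom, liftHom_trc, coneGen]
  split_ifs with h
  · rw [prodProj]
    show (coneMapAux s e j).elim 1 trc = _
    cases hA : coneMapAux s e j with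
    | none => exact (coneMapAux_none hA).symm
    | some e' => exact (coneMapAux_some hA).symm
  · rw [not_not] at h
    have : coneMapAux s e j = none := by rw [h]
    rw [coneMapAux_none this, map_one]

/-- The product fan is a limit fan. -/
noncomputable def prodFanIsLimit (J : Type) (d : J → FPCMObj) : IsLimit (prodFan J d) :=
  mkFanLimit _ (fun s => ⟨coneLiftHom s, coneLiftHom_basic s⟩)
    (fun s j => by
      apply Subtype.ext
      apply traceHom_ext
      intro e
      exact coneLiftHom_fac s j e)
    (fun s m hm => by
      apply Subtype.ext
      apply traceHom_ext
      intro e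
      show m.1 (trc e) = coneLiftHom s (trc e)
      rw [coneLiftHom, liftHom_trc]
      have hproj : ∀ j : J, prodProj J d j (m.1 (trc e)) = (s.proj j).1 (trc e) := by
        intro j
        exact congrArg (fun f => f.1 (trc e)) (hm j)
      rcases m.2 e with ⟨x, hx⟩ | hone
      · have hfun : coneMapAux s e = x.val := by
          funext j
          cases hxj : x.val j with
          | some e' =>
            refine coneMapAux_eq_some ?_
            rw [← hproj j, hx, prodProj]
            show (x.val j).elim 1 trc = _
            rw [hxj]
            rfl
          | none =>
            refine coneMapAux_eq_none ?_
            rw [← hproj j, hx, prodProj]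
            show (x.val j).elim 1 trc = _
            rw [hxj]
            rfl
        rw [hx, coneGen, dif_pos (show coneMapAux s e ≠ fun _ => none by
          rw [hfun]; exact x.2)]
        exact congrArg trc (Subtype.ext hfun).symm
      · have hnone : coneMapAux s e = fun _ => none := by
          funext j
          apply coneMapAux_eq_none
          rw [← hproj j, hone]
          exact map_one _
        rw [hone, coneGen, dif_neg (not_not_intro hnone)]; rfl)

theorem fpcm_prod_exists (J : Type) (d : J → FPCMObj) :
    ∃ c : Fan d, c.pt = prodFPCMObj J d ∧ Nonempty (IsLimit c) :=
  ⟨prodFan J d, rfl, ⟨prodFanIsLimit J d⟩⟩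

/-- The category `FPCM` has all small products, and the product of a family
`{M(Eⱼ,Iⱼ)}` is the explicitly described trace monoid. -/
theorem fpcm_hasProducts :
    HasProducts.{0} FPCMObj ∧
      ∀ (J : Type) (d : J → FPCMObj),
        ∃ c : Fan d, c.pt = prodFPCMObj J d ∧ Nonempty (IsLimit c) := by
  refine ⟨?_, fpcm_prod_exists⟩
  intro J
  refine ⟨fun F => ?_⟩
  have : HasLimit (Discrete.functor (F.obj ∘ Discrete.mk)) :=
    HasLimit.mk ⟨prodFan J _, prodFanIsLimit J _⟩
  exact hasLimit_of_iso Discrete.natIsoFunctor.symm
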